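/- Let V be a finite-dimensional real vector space, W a real vector space with a symmetric bilinear form, and φ : V × V → W a bilinear form. Then the set of regular elements of φ, i.e., the set of X ∈ V with dim φ_X(V) maximal, is an open dense subset of V. -/

import Mathlib

open Module Matrix

/-- If some `n × n` "minor" matrix built from dual functionals has nonzero determinant,
then the rank of `φ Y` is at least `n`. -/
private lemma aux_rank_ge {V W : Type*} [AddCommGroup V] [Module ℝ V] [FiniteDimensional ℝ V]
    [AddCommGroup W] [Module ℝ W] (φ : V →ₗ[ℝ] V →ₗ[ℝ] W) (Y : V) {n : ℕ}
    (v : Fin n → V) (g : Fin n → Module.Dual ℝ W)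
    (hdet : (Matrix.of fun i j => g i (φ Y (v j))).det ≠ 0) :
    n ≤ Module.finrank ℝ (LinearMap.range (φ Y)) := by
  have li : LinearIndependent ℝ (fun j => φ Y (v j)) := by
    rw [Fintype.linearIndependent_iff]
    intro c hc j
    have hmv : (Matrix.of fun i j => g i (φ Y (v j))).mulVec c = 0 := by
      funext i
      have := congrArg (g i) hc
      simp only [map_sum, _root_.map_smul, map_zero] at this
      simpa [Matrix.mulVec, dotProduct, mul_comm, smul_eq_mul] using this
    have := Matrix.eq_zero_of_mulVec_eq_zero hdet hmv
    exact congrFun this j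
  have li' : LinearIndependent ℝ
      (fun j => (⟨φ Y (v j), LinearMap.mem_range_self _ _⟩ : LinearMap.range (φ Y))) := by
    apply LinearIndependent.of_comp (LinearMap.range (φ Y)).subtype
    exact li
  simpa using li'.fintype_card_le_finrank

/-- Every `X` admits witnesses `v`, `g` for which the minor matrix is the identity. -/
private lemma aux_witness {V W : Type*} [AddCommGroup V] [Module ℝ V] [FiniteDimensional ℝ V]
    [AddCommGroup W] [Module ℝ W] (φ : V →ₗ[ℝ] V →ₗ[ℝ] W) (X : V) :
    ∃ (v : Fin (Module.finrank ℝ (LinearMap.range (φ X))) → V)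
      (g : Fin (Module.finrank ℝ (LinearMap.range (φ X))) → Module.Dual ℝ W),
      (Matrix.of fun i j => g i (φ X (v j))) = 1 := by
  set p := LinearMap.range (φ X)
  let b : Basis (Fin (Module.finrank ℝ p)) ℝ p := Module.finBasis ℝ p
  choose v hv using fun j => (b j).2
  obtain ⟨q, hq⟩ := p.exists_isCompl
  refine ⟨v, fun i => (b.coord i).comp (p.projectionOnto q hq), ?_⟩
  ext i j
  have : (⟨φ X (v j), LinearMap.mem_range_self _ _⟩ : p) = b j := Subtype.ext (hv j)
  simp only [Matrix.of_apply, LinearMap.comp_apply]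
  rw [show φ X (v j) = ((b j : p) : W) by rw [← hv j],
    Submodule.projectionOnto_apply_left hq (b j)]
  simp [Basis.coord_apply, Finsupp.single_apply, Matrix.one_apply, eq_comm]

private lemma aux_det_eval {n : ℕ} (A : Matrix (Fin n) (Fin n) ℝ) (t : ℝ) :
    ((-A).charpoly).eval t = (A + t • (1 : Matrix (Fin n) (Fin n) ℝ)).det := by
  rw [Matrix.charpoly, ← Polynomial.coe_evalRingHom, RingHom.map_det]
  congr 1
  ext i j
  by_cases h : i = j
  · subst h
    simp [Matrix.charmatrix_apply_eq, Matrix.one_apply]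
    ring
  · simp [Matrix.charmatrix_apply_ne _ _ _ h, Matrix.one_apply, h]

/-- The set of regular elements of a bilinear form φ : V × V → W is open and dense. -/
theorem stmt_2 (V W : Type*) [NormedAddCommGroup V] [NormedSpace ℝ V] [FiniteDimensional ℝ V]
    [AddCommGroup W] [Module ℝ W]
    (B : LinearMap.BilinForm ℝ W) (hsymm : B.IsSymm)
    (φ : V →ₗ[ℝ] V →ₗ[ℝ] W) :
    IsOpen {X : V | ∀ Z : V, Module.finrank ℝ (LinearMap.range (φ Z)) ≤
        Module.finrank ℝ (LinearMap.range (φ X))} ∧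
    Dense {X : V | ∀ Z : V, Module.finrank ℝ (LinearMap.range (φ Z)) ≤
        Module.finrank ℝ (LinearMap.range (φ X))} := by
  set f : V → ℕ := fun X => Module.finrank ℝ (LinearMap.range (φ X)) with hf
  -- existence of a maximizer
  have hbdd : BddAbove (Set.range f) := ⟨Module.finrank ℝ V, by
    rintro _ ⟨X, rfl⟩; exact (φ X).finrank_range_le⟩
  obtain ⟨X0, hX0⟩ : ∃ X0 : V, sSup (Set.range f) = f X0 :=
    (Nat.sSup_mem ⟨f 0, Set.mem_range_self 0⟩ hbdd).imp fun X0 h => h.symm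
  set r := f X0 with hr
  have hmax : ∀ Z, f Z ≤ r := fun Z => hX0 ▸ le_csSup hbdd (Set.mem_range_self Z)
  -- continuity of minor determinants
  have hcont : ∀ {n : ℕ} (v : Fin n → V) (g : Fin n → Module.Dual ℝ W),
      Continuous fun Y : V => (Matrix.of fun i j => g i (φ Y (v j))).det := by
    intro n v g
    apply Continuous.matrix_det
    apply continuous_matrix
    intro i j
    exact LinearMap.continuous_of_finiteDimensional ((g i).comp (φ.flip (v j)))
  constructor
  · -- openness
    rw [isOpen_iff_mem_nhds]
    intro X hX
    obtain ⟨v, g, hvg⟩ := aux_witness φ X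
    have hXr : f X = r := le_antisymm (hmax X) (hX X0)
    have hne : (Matrix.of fun i j => g i (φ X (v j))).det ≠ 0 := by
      rw [hvg]; simp
    have hev : ∀ᶠ Y in nhds X, (Matrix.of fun i j => g i (φ Y (v j))).det ≠ 0 :=
      (hcont v g).continuousAt.eventually_ne hne
    filter_upwards [hev] with Y hY
    intro Z
    have h2 : r ≤ f Y := le_of_eq_of_le hXr.symm (aux_rank_ge φ Y v g hY)
    exact (hmax Z).trans h2
  · -- density
    rw [Metric.dense_iff]
    intro X ε hε
    obtain ⟨v, g, hvg⟩ := aux_witness φ X0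
    set A : Matrix (Fin r) (Fin r) ℝ := Matrix.of fun i j => g i (φ X (v j)) with hA
    have hmonic : ((-A).charpoly) ≠ 0 := ((-A).charpoly_monic).ne_zero
    have hroots : {t : ℝ | ((-A).charpoly).IsRoot t}.Finite :=
      Polynomial.finite_setOf_isRoot hmonic
    have hδ : (0 : ℝ) < ε / (‖X0‖ + 1) := by positivity
    obtain ⟨t, ht⟩ : ∃ t, t ∈ Set.Ioo (0:ℝ) (ε / (‖X0‖ + 1)) \
        {t : ℝ | ((-A).charpoly).IsRoot t} :=
      ((Set.Ioo_infinite hδ).diff hroots).nonempty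
    obtain ⟨⟨ht0, htδ⟩, htroot⟩ := ht
    refine ⟨X + t • X0, ?_, ?_⟩
    · rw [Metric.mem_ball, dist_eq_norm]
      have : ‖X + t • X0 - X‖ = t * ‖X0‖ := by
        simp [norm_smul, abs_of_pos ht0]
      rw [this]
      calc t * ‖X0‖ ≤ t * (‖X0‖ + 1) := by nlinarith [norm_nonneg X0]
        _ < ε / (‖X0‖ + 1) * (‖X0‖ + 1) := by
            have h1 : (0:ℝ) < ‖X0‖ + 1 := by positivity
            exact mul_lt_mul_of_pos_right htδ h1
        _ = ε := by field_simp
    · have hmat : (Matrix.of fun i j => g i (φ (X + t • X0) (v j)))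
          = A + t • (1 : Matrix (Fin r) (Fin r) ℝ) := by
        ext i j
        have h1 : g i (φ X0 (v j)) = (1 : Matrix (Fin r) (Fin r) ℝ) i j := by
          have := congrFun (congrFun hvg i) j
          simpa using this
        have h2 : φ (X + t • X0) (v j) = φ X (v j) + t • (φ X0 (v j)) := by
          simp [map_add, _root_.map_smul]
        simp [Matrix.add_apply, Matrix.smul_apply, h2, map_add, _root_.map_smul, h1,
          smul_eq_mul, hA]
      have hdet : (Matrix.of fun i j => g i (φ (X + t • X0) (v j))).det ≠ 0 := by
        rw [hmat, ← aux_det_eval]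
        exact htroot
      have key := aux_rank_ge φ (X + t • X0) v g hdet
      intro Z
      exact (hmax Z).trans key
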